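/- Sitewise cost bounds for GPA when the hub is not exhausted: for any threshold vector γ_1,…,γ_n with γ_i ∈ [0,1], let ℓ be the allocation produced by the GPA policy, and suppose the remaining hub supply at the end of the horizon is positive (s^end = s − Σ_i L_i > 0). Then for every site i ∈ {1,…,n}: (i) transport_i(ℓ) ≤ γ_i·D_i·(w_i/c_i) + p·(b_i + 2c_i), and (ii) penalty_i(ℓ) ≤ (1 − γ_i)·p·D_i + p·c_i. -/

import Mathlib

open Finset

/-- `stock b d ℓ t` is the post-replenishment stock `k^{t+1}` at a single site
(with `stock b d ℓ 0 = k^1 = b`), under demands `d` and allocations `ℓ`. -/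
noncomputable def stock (b : ℕ) (d : ℕ → ℕ) (ℓ : ℕ → ℝ) : ℕ → ℝ
  | 0 => (b : ℝ)
  | t + 1 => max (stock b d ℓ t - (d (t + 1) : ℝ)) 0 + ℓ (t + 1)

/-- Sitewise transport cost `Σ_{t=1}^T w_i ⌈ℓ_i^t / c_i⌉`. -/
noncomputable def transportCost (T : ℕ) (wi : ℝ) (ci : ℕ) (ℓ : ℕ → ℝ) : ℝ :=
  ∑ t ∈ Icc 1 T, wi * (⌈ℓ t / (ci : ℝ)⌉ : ℝ)

/-- Sitewise lost-sales penalty `Σ_{t=1}^T p (d_i^t − k_i^t)_+`. -/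
noncomputable def penaltyCost (T : ℕ) (p : ℝ) (b : ℕ) (d : ℕ → ℕ) (ℓ : ℕ → ℝ) : ℝ :=
  ∑ t ∈ Icc 1 T, p * max ((d t : ℝ) - stock b d ℓ (t - 1)) 0

/-- Total cost of an allocation. -/
noncomputable def totalCost {n : ℕ} (T : ℕ) (w : Fin n → ℝ) (c b : Fin n → ℕ)
    (p : ℝ) (d : Fin n → ℕ → ℕ) (ℓ : Fin n → ℕ → ℝ) : ℝ :=
  ∑ i, (transportCost T (w i) (c i) (ℓ i) + penaltyCost T p (b i) (d i) (ℓ i))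

/-- One time step of GPA: eligible sites are processed in index order; site `i` is
eligible if `r i < b i` and `Lprev i ≤ γ i * Dt i`; an eligible site requests
`⌈(b i − r i)/c i⌉` full shipments and receives the min of that and the remaining
hub supply. Returns the remaining supply and the per-site allocation. -/
noncomputable def gpaInner {n : ℕ} (b c : Fin n → ℕ) (γ : Fin n → ℝ)
    (Dt Lprev r : Fin n → ℕ) (rem : ℕ) : ℕ × (Fin n → ℕ) :=
  (List.finRange n).foldl
    (fun (st : ℕ × (Fin n → ℕ)) (i : Fin n) =>
      if r i < b i ∧ (Lprev i : ℝ) ≤ γ i * (Dt i : ℝ) then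
        let q : ℕ := (b i - r i + c i - 1) / c i
        let give : ℕ := min st.1 (c i * q)
        (st.1 - give, Function.update st.2 i give)
      else st)
    (rem, fun _ => 0)

/-- GPA state after `t` time steps: (remaining hub supply, current stocks `k^{t+1}`,
cumulative allocations `L^t`). Initially `(s, b, 0)`. -/
noncomputable def gpaState {n : ℕ} (b c : Fin n → ℕ) (γ : Fin n → ℝ)
    (d : Fin n → ℕ → ℕ) (s : ℕ) : ℕ → ℕ × (Fin n → ℕ) × (Fin n → ℕ)
  | 0 => (s, b, fun _ => 0)
  | t + 1 =>
    let st := gpaState b c γ d s t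
    let r : Fin n → ℕ := fun i => st.2.1 i - d i (t + 1)
    let Dt : Fin n → ℕ := fun i => ∑ u ∈ Icc 1 (t + 1), d i u
    let res := gpaInner b c γ Dt st.2.2 r st.1
    (res.1, fun i => r i + res.2 i, fun i => st.2.2 i + res.2 i)

/-- Cumulative GPA allocation `L_i^t`. -/
noncomputable def gpaL {n : ℕ} (b c : Fin n → ℕ) (γ : Fin n → ℝ)
    (d : Fin n → ℕ → ℕ) (s : ℕ) (i : Fin n) (t : ℕ) : ℕ :=
  (gpaState b c γ d s t).2.2 i

/-- Per-step GPA allocation `ℓ_i^t` (as a real number). -/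
noncomputable def gpaAlloc {n : ℕ} (b c : Fin n → ℕ) (γ : Fin n → ℝ)
    (d : Fin n → ℕ → ℕ) (s : ℕ) (i : Fin n) (t : ℕ) : ℝ :=
  ((gpaL b c γ d s i t - gpaL b c γ d s i (t - 1) : ℕ) : ℝ)

section FoldAux
variable {n : ℕ} (b c : Fin n → ℕ) (γ : Fin n → ℝ) (Dt Lprev r : Fin n → ℕ)

noncomputable def innerStep : ℕ × (Fin n → ℕ) → Fin n → ℕ × (Fin n → ℕ) :=
  fun st i =>
      if r i < b i ∧ (Lprev i : ℝ) ≤ γ i * (Dt i : ℝ) then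
        let q : ℕ := (b i - r i + c i - 1) / c i
        let give : ℕ := min st.1 (c i * q)
        (st.1 - give, Function.update st.2 i give)
      else st

lemma gpaInner_eq (rem : ℕ) :
    gpaInner b c γ Dt Lprev r rem
      = (List.finRange n).foldl (innerStep b c γ Dt Lprev r) (rem, fun _ => 0) := rfl

lemma innerStep_pos (st : ℕ × (Fin n → ℕ)) (i : Fin n)
    (hc : r i < b i ∧ (Lprev i : ℝ) ≤ γ i * (Dt i : ℝ)) :
    innerStep b c γ Dt Lprev r st i
      = (st.1 - min st.1 (c i * ((b i - r i + c i - 1) / c i)),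
         Function.update st.2 i (min st.1 (c i * ((b i - r i + c i - 1) / c i)))) := by
  unfold innerStep; rw [if_pos hc]

lemma innerStep_neg (st : ℕ × (Fin n → ℕ)) (i : Fin n)
    (hc : ¬ (r i < b i ∧ (Lprev i : ℝ) ≤ γ i * (Dt i : ℝ))) :
    innerStep b c γ Dt Lprev r st i = st := by
  unfold innerStep; rw [if_neg hc]

lemma innerStep_fst_le (st : ℕ × (Fin n → ℕ)) (i : Fin n) :
    (innerStep b c γ Dt Lprev r st i).1 ≤ st.1 := by
  by_cases hc : r i < b i ∧ (Lprev i : ℝ) ≤ γ i * (Dt i : ℝ)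
  · rw [innerStep_pos b c γ Dt Lprev r st i hc]; exact Nat.sub_le _ _
  · rw [innerStep_neg b c γ Dt Lprev r st i hc]

lemma foldl_fst_le (l : List (Fin n)) (st : ℕ × (Fin n → ℕ)) :
    (l.foldl (innerStep b c γ Dt Lprev r) st).1 ≤ st.1 := by
  induction l generalizing st with
  | nil => exact le_rfl
  | cons a tl ih =>
      exact le_trans (ih _) (innerStep_fst_le b c γ Dt Lprev r st a)

lemma foldl_snd_not_mem (l : List (Fin n)) (st : ℕ × (Fin n → ℕ)) (i : Fin n)
    (h : i ∉ l) :
    (l.foldl (innerStep b c γ Dt Lprev r) st).2 i = st.2 i := by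
  induction l generalizing st with
  | nil => rfl
  | cons a tl ih =>
      simp only [List.foldl_cons]
      rw [ih _ (fun hm => h (List.mem_cons_of_mem _ hm))]
      by_cases hc : r a < b a ∧ (Lprev a : ℝ) ≤ γ a * (Dt a : ℝ)
      · rw [innerStep_pos b c γ Dt Lprev r st a hc]
        exact Function.update_of_ne (by rintro rfl; exact h List.mem_cons_self) _ _
      · rw [innerStep_neg b c γ Dt Lprev r st a hc]

lemma foldl_spec (l : List (Fin n)) (st : ℕ × (Fin n → ℕ)) (i : Fin n)
    (hnd : l.Nodup) (hi : i ∈ l) :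
    (¬ (r i < b i ∧ (Lprev i : ℝ) ≤ γ i * (Dt i : ℝ)) →
        (l.foldl (innerStep b c γ Dt Lprev r) st).2 i = st.2 i)
    ∧ ((r i < b i ∧ (Lprev i : ℝ) ≤ γ i * (Dt i : ℝ)) →
        (l.foldl (innerStep b c γ Dt Lprev r) st).2 i ≤ c i * ((b i - r i + c i - 1) / c i)
        ∧ ((l.foldl (innerStep b c γ Dt Lprev r) st).2 i = c i * ((b i - r i + c i - 1) / c i)
            ∨ (l.foldl (innerStep b c γ Dt Lprev r) st).1 = 0)) := by
  induction l generalizing st with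
  | nil => cases hi
  | cons a tl ih =>
      rcases List.nodup_cons.mp hnd with ⟨ha, hnd'⟩
      simp only [List.foldl_cons]
      rcases List.mem_cons.mp hi with he | hm
      · subst he
        constructor
        · intro hnc
          rw [foldl_snd_not_mem b c γ Dt Lprev r tl _ i ha,
            innerStep_neg b c γ Dt Lprev r st i hnc]
        · intro hc
          rw [foldl_snd_not_mem b c γ Dt Lprev r tl _ i ha,
            innerStep_pos b c γ Dt Lprev r st i hc]
          simp only [Function.update_self]
          refine ⟨min_le_right _ _, ?_⟩
          rcases le_total (c i * ((b i - r i + c i - 1) / c i)) st.1 with h | h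
          · exact Or.inl (min_eq_right h)
          · right
            have hfle := foldl_fst_le b c γ Dt Lprev r tl
              (innerStep b c γ Dt Lprev r st i)
            rw [innerStep_pos b c γ Dt Lprev r st i hc] at hfle
            simp only at hfle
            rw [min_eq_left h] at hfle ⊢
            omega
      · have hne : i ≠ a := by rintro rfl; exact ha hm
        have hih := ih (innerStep b c γ Dt Lprev r st a) hnd' hm
        refine ⟨?_, hih.2⟩
        intro hnc
        rw [hih.1 hnc]
        by_cases hca : r a < b a ∧ (Lprev a : ℝ) ≤ γ a * (Dt a : ℝ)
        · rw [innerStep_pos b c γ Dt Lprev r st a hca]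
          exact Function.update_of_ne hne _ _
        · rw [innerStep_neg b c γ Dt Lprev r st a hca]

lemma foldl_conserve (l : List (Fin n)) (st : ℕ × (Fin n → ℕ))
    (hnd : l.Nodup) (h0 : ∀ i ∈ l, st.2 i = 0) :
    (l.foldl (innerStep b c γ Dt Lprev r) st).1
      + ∑ i, (l.foldl (innerStep b c γ Dt Lprev r) st).2 i
      = st.1 + ∑ i, st.2 i := by
  induction l generalizing st with
  | nil => rfl
  | cons a tl ih =>
      rcases List.nodup_cons.mp hnd with ⟨ha, hnd'⟩
      simp only [List.foldl_cons]
      have h0a : st.2 a = 0 := h0 a List.mem_cons_self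
      have hstep : (innerStep b c γ Dt Lprev r st a).1
          + ∑ i, (innerStep b c γ Dt Lprev r st a).2 i = st.1 + ∑ i, st.2 i := by
        by_cases hc : r a < b a ∧ (Lprev a : ℝ) ≤ γ a * (Dt a : ℝ)
        · rw [innerStep_pos b c γ Dt Lprev r st a hc]
          simp only
          rw [Finset.sum_update_of_mem (Finset.mem_univ a)]
          have hs : ∑ i ∈ Finset.univ \ {a}, st.2 i = ∑ i, st.2 i := by
            rw [Finset.sum_eq_sum_sdiff_singleton_add (Finset.mem_univ a) (st.2), h0a, add_zero]
          rw [hs]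
          have hmin : min st.1 (c a * ((b a - r a + c a - 1) / c a)) ≤ st.1 :=
            min_le_left _ _
          omega
        · rw [innerStep_neg b c γ Dt Lprev r st a hc]
      have h0' : ∀ i ∈ tl, (innerStep b c γ Dt Lprev r st a).2 i = 0 := by
        intro j hj
        have hne : j ≠ a := by rintro rfl; exact ha hj
        by_cases hc : r a < b a ∧ (Lprev a : ℝ) ≤ γ a * (Dt a : ℝ)
        · rw [innerStep_pos b c γ Dt Lprev r st a hc]
          simp only
          rw [Function.update_of_ne hne]
          exact h0 j (List.mem_cons_of_mem _ hj)
        · rw [innerStep_neg b c γ Dt Lprev r st a hc]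
          exact h0 j (List.mem_cons_of_mem _ hj)
      rw [ih _ hnd' h0', hstep]

lemma gpaInner_fst_le (rem : ℕ) : (gpaInner b c γ Dt Lprev r rem).1 ≤ rem :=
  foldl_fst_le b c γ Dt Lprev r _ _

lemma gpaInner_conserve (rem : ℕ) :
    (gpaInner b c γ Dt Lprev r rem).1 + ∑ i, (gpaInner b c γ Dt Lprev r rem).2 i = rem := by
  have := foldl_conserve b c γ Dt Lprev r (List.finRange n) (rem, fun _ => 0)
    (List.nodup_finRange n) (fun _ _ => rfl)
  simpa [gpaInner_eq] using this

lemma gpaInner_not_cond (rem : ℕ) (i : Fin n)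
    (h : ¬ (r i < b i ∧ (Lprev i : ℝ) ≤ γ i * (Dt i : ℝ))) :
    (gpaInner b c γ Dt Lprev r rem).2 i = 0 :=
  (foldl_spec b c γ Dt Lprev r (List.finRange n) (rem, fun _ => 0) i
    (List.nodup_finRange n) (List.mem_finRange i)).1 h

lemma gpaInner_cond (rem : ℕ) (i : Fin n)
    (h : r i < b i ∧ (Lprev i : ℝ) ≤ γ i * (Dt i : ℝ)) :
    (gpaInner b c γ Dt Lprev r rem).2 i ≤ c i * ((b i - r i + c i - 1) / c i)
    ∧ ((gpaInner b c γ Dt Lprev r rem).2 i = c i * ((b i - r i + c i - 1) / c i)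
        ∨ (gpaInner b c γ Dt Lprev r rem).1 = 0) :=
  (foldl_spec b c γ Dt Lprev r (List.finRange n) (rem, fun _ => 0) i
    (List.nodup_finRange n) (List.mem_finRange i)).2 h

end FoldAux


section StateAux
variable {n : ℕ} (b c : Fin n → ℕ) (γ : Fin n → ℝ) (d : Fin n → ℕ → ℕ) (s : ℕ)

lemma gpaState_succ (t : ℕ) :
    gpaState b c γ d s (t + 1)
      = ((gpaInner b c γ (fun i => ∑ u ∈ Icc 1 (t + 1), d i u)
            ((gpaState b c γ d s t).2.2)
            (fun i => (gpaState b c γ d s t).2.1 i - d i (t + 1))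
            ((gpaState b c γ d s t).1)).1,
         fun i => ((gpaState b c γ d s t).2.1 i - d i (t + 1))
            + (gpaInner b c γ (fun i => ∑ u ∈ Icc 1 (t + 1), d i u)
                ((gpaState b c γ d s t).2.2)
                (fun i => (gpaState b c γ d s t).2.1 i - d i (t + 1))
                ((gpaState b c γ d s t).1)).2 i,
         fun i => (gpaState b c γ d s t).2.2 i
            + (gpaInner b c γ (fun i => ∑ u ∈ Icc 1 (t + 1), d i u)
                ((gpaState b c γ d s t).2.2)
                (fun i => (gpaState b c γ d s t).2.1 i - d i (t + 1))
                ((gpaState b c γ d s t).1)).2 i) := rfl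

lemma gpaState_fst_succ_le (t : ℕ) :
    (gpaState b c γ d s (t + 1)).1 ≤ (gpaState b c γ d s t).1 := by
  rw [gpaState_succ]
  exact gpaInner_fst_le _ _ _ _ _ _ _

lemma gpaState_fst_anti {t t' : ℕ} (h : t ≤ t') :
    (gpaState b c γ d s t').1 ≤ (gpaState b c γ d s t).1 := by
  induction t' with
  | zero => simp_all
  | succ u ih =>
      rcases Nat.lt_or_ge t (u + 1) with hlt | hge
      · exact le_trans (gpaState_fst_succ_le b c γ d s u) (ih (Nat.lt_succ_iff.mp hlt))
      · have : t = u + 1 := le_antisymm h hge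
        subst this; exact le_rfl

lemma gpaState_conserve (t : ℕ) :
    (gpaState b c γ d s t).1 + ∑ i, (gpaState b c γ d s t).2.2 i = s := by
  induction t with
  | zero => simp [gpaState]
  | succ u ih =>
      rw [gpaState_succ]
      simp only
      rw [Finset.sum_add_distrib]
      have := gpaInner_conserve b c γ (fun i => ∑ u ∈ Icc 1 (u + 1), d i u)
        ((gpaState b c γ d s u).2.2)
        (fun i => (gpaState b c γ d s u).2.1 i - d i (u + 1))
        ((gpaState b c γ d s u).1)
      omega

end StateAux


section Site
variable {n : ℕ} (b c : Fin n → ℕ) (γ : Fin n → ℝ) (d : Fin n → ℕ → ℕ) (s : ℕ) (i : Fin n)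

/-- stock at site i after t steps -/
noncomputable def siteK (t : ℕ) : ℕ := (gpaState b c γ d s t).2.1 i

/-- allocation to site i at step t+1 -/
noncomputable def siteA (t : ℕ) : ℕ :=
  (gpaInner b c γ (fun j => ∑ u ∈ Icc 1 (t + 1), d j u)
      ((gpaState b c γ d s t).2.2)
      (fun j => (gpaState b c γ d s t).2.1 j - d j (t + 1))
      ((gpaState b c γ d s t).1)).2 i

lemma siteK_zero : siteK b c γ d s i 0 = b i := rfl
lemma gpaL_zero : gpaL b c γ d s i 0 = 0 := rfl

lemma siteK_succ (t : ℕ) :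
    siteK b c γ d s i (t + 1)
      = (siteK b c γ d s i t - d i (t + 1)) + siteA b c γ d s i t := by
  simp only [siteK, siteA]; rw [gpaState_succ]

lemma gpaL_succ (t : ℕ) :
    gpaL b c γ d s i (t + 1) = gpaL b c γ d s i t + siteA b c γ d s i t := by
  simp only [gpaL, siteA]; rw [gpaState_succ]

lemma state_fst_succ (t : ℕ) :
    (gpaState b c γ d s (t + 1)).1
      = (gpaInner b c γ (fun j => ∑ u ∈ Icc 1 (t + 1), d j u)
          ((gpaState b c γ d s t).2.2)
          (fun j => (gpaState b c γ d s t).2.1 j - d j (t + 1))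
          ((gpaState b c γ d s t).1)).1 := by
  rw [gpaState_succ]

lemma ceil_div_bounds (x cc : ℕ) (hc : 1 ≤ cc) (hx : 1 ≤ x) :
    x ≤ cc * ((x + cc - 1) / cc) ∧ cc * ((x + cc - 1) / cc) ≤ x + cc - 1 := by
  have he : x + cc - 1 = (x - 1) + cc := by omega
  rw [he, Nat.add_div_right _ hc]
  have h1 := Nat.div_add_mod (x - 1) cc
  have h2 : (x - 1) % cc < cc := Nat.mod_lt _ hc
  rw [Nat.mul_add, Nat.mul_one]
  omega

lemma siteA_not_cond (t : ℕ)
    (hcond : ¬ (siteK b c γ d s i t - d i (t + 1) < b i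
        ∧ (gpaL b c γ d s i t : ℝ) ≤ γ i * ((∑ u ∈ Icc 1 (t + 1), d i u : ℕ) : ℝ))) :
    siteA b c γ d s i t = 0 :=
  gpaInner_not_cond b c γ _ _ _ _ i hcond

lemma siteA_cond (t : ℕ) (hc1 : 1 ≤ c i)
    (hpos : 0 < (gpaState b c γ d s (t + 1)).1)
    (hcond : siteK b c γ d s i t - d i (t + 1) < b i
        ∧ (gpaL b c γ d s i t : ℝ) ≤ γ i * ((∑ u ∈ Icc 1 (t + 1), d i u : ℕ) : ℝ)) :
    b i - (siteK b c γ d s i t - d i (t + 1)) ≤ siteA b c γ d s i t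
    ∧ siteA b c γ d s i t ≤ b i - (siteK b c γ d s i t - d i (t + 1)) + c i - 1
    ∧ ∃ m : ℕ, siteA b c γ d s i t = c i * m := by
  have h := gpaInner_cond b c γ (fun j => ∑ u ∈ Icc 1 (t + 1), d j u)
    ((gpaState b c γ d s t).2.2)
    (fun j => (gpaState b c γ d s t).2.1 j - d j (t + 1))
    ((gpaState b c γ d s t).1) i hcond
  rw [state_fst_succ] at hpos
  have hfull : siteA b c γ d s i t
      = c i * ((b i - (siteK b c γ d s i t - d i (t + 1)) + c i - 1) / c i) := by
    rcases h.2 with he | h0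
    · exact he
    · exfalso; rw [h0] at hpos; exact Nat.lt_irrefl 0 hpos
  have hx : 1 ≤ b i - (siteK b c γ d s i t - d i (t + 1)) := by
    have := hcond.1; omega
  have hb := ceil_div_bounds (b i - (siteK b c γ d s i t - d i (t + 1))) (c i) hc1 hx
  exact ⟨hfull ▸ hb.1, hfull ▸ hb.2, _, hfull⟩

lemma siteA_mul (t : ℕ) (hc1 : 1 ≤ c i)
    (hpos : 0 < (gpaState b c γ d s (t + 1)).1) :
    ∃ m : ℕ, siteA b c γ d s i t = c i * m := by
  by_cases hcond : (siteK b c γ d s i t - d i (t + 1) < b i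
      ∧ (gpaL b c γ d s i t : ℝ) ≤ γ i * ((∑ u ∈ Icc 1 (t + 1), d i u : ℕ) : ℝ))
  · exact (siteA_cond b c γ d s i t hc1 hpos hcond).2.2
  · exact ⟨0, by rw [Nat.mul_zero]; exact siteA_not_cond b c γ d s i t hcond⟩


/-- The main invariant. -/
lemma site_invariant (T : ℕ) (hc1 : 1 ≤ c i)
    (hd : ∀ t ∈ Icc 1 T, d i t ≤ b i)
    (hγ0 : 0 ≤ γ i) (hγ1 : γ i ≤ 1)
    (hpos : ∀ u, u ≤ T → 0 < (gpaState b c γ d s u).1) :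
    ∀ t, t ≤ T →
      (γ i * ((∑ u ∈ Icc 1 t, d i u : ℕ) : ℝ)
          ≤ ((b i : ℝ) + (gpaL b c γ d s i t : ℝ) - (siteK b c γ d s i t : ℝ)) + c i)
      ∧ (γ i * ((∑ u ∈ Icc 1 t, d i u : ℕ) : ℝ) ≤ (gpaL b c γ d s i t : ℝ) + c i
          ∨ b i ≤ siteK b c γ d s i t)
      ∧ ((gpaL b c γ d s i t : ℝ) ≤ γ i * ((∑ u ∈ Icc 1 t, d i u : ℕ) : ℝ) + b i + c i) := by
  intro t
  induction t with
  | zero =>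
      intro _
      rw [siteK_zero, gpaL_zero]
      have h0 : (∑ u ∈ Icc 1 0, d i u) = 0 := by simp
      rw [h0]
      have hc0 : (1:ℝ) ≤ (c i : ℝ) := by exact_mod_cast hc1
      refine ⟨by push_cast; linarith, Or.inr le_rfl, by push_cast; linarith⟩
  | succ t ih =>
      intro ht
      obtain ⟨iA, iB, iC⟩ := ih (by omega)
      have hdd : d i (t + 1) ≤ b i := hd (t + 1) (mem_Icc.mpr ⟨by omega, ht⟩)
      have hD : (∑ u ∈ Icc 1 (t + 1), d i u) = (∑ u ∈ Icc 1 t, d i u) + d i (t + 1) :=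
        Finset.sum_Icc_succ_top (by omega) _
      have hK := siteK_succ b c γ d s i t
      have hL := gpaL_succ b c γ d s i t
      have hc0 : (1:ℝ) ≤ (c i : ℝ) := by exact_mod_cast hc1
      have hdd0 : (0:ℝ) ≤ (d i (t + 1) : ℝ) := Nat.cast_nonneg _
      have hγd0 : (0:ℝ) ≤ γ i * (d i (t + 1) : ℝ) := mul_nonneg hγ0 hdd0
      have hγdd : γ i * (d i (t + 1) : ℝ) ≤ (d i (t + 1) : ℝ) :=
        mul_le_of_le_one_left hdd0 hγ1
      have hddb : (d i (t + 1) : ℝ) ≤ (b i : ℝ) := by exact_mod_cast hdd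
      have hA0' : (0:ℝ) ≤ (siteA b c γ d s i t : ℝ) := Nat.cast_nonneg _
      have hDc : ((∑ u ∈ Icc 1 (t + 1), d i u : ℕ) : ℝ)
          = ((∑ u ∈ Icc 1 t, d i u : ℕ) : ℝ) + (d i (t + 1) : ℝ) := by
        rw [hD, Nat.cast_add]
      have hLc : (gpaL b c γ d s i (t + 1) : ℝ)
          = (gpaL b c γ d s i t : ℝ) + (siteA b c γ d s i t : ℝ) := by
        rw [hL, Nat.cast_add]
      by_cases hcond : (siteK b c γ d s i t - d i (t + 1) < b i
          ∧ (gpaL b c γ d s i t : ℝ) ≤ γ i * ((∑ u ∈ Icc 1 (t + 1), d i u : ℕ) : ℝ))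
      · obtain ⟨hA1, hA2, _⟩ := siteA_cond b c γ d s i t hc1 (hpos (t+1) ht) hcond
        have hKb : b i ≤ siteK b c γ d s i (t + 1) := by
          rw [hK]; have := hcond.1; omega
        have hA2' : siteA b c γ d s i t ≤ b i + c i := by omega
        have hA2R : (siteA b c γ d s i t : ℝ) ≤ (b i : ℝ) + (c i : ℝ) := by
          exact_mod_cast hA2'
        have hLe := hcond.2
        refine ⟨?_, Or.inr hKb, ?_⟩
        · rcases le_or_gt (d i (t + 1)) (siteK b c γ d s i t) with hloss | hloss
          · have hKc : (siteK b c γ d s i (t + 1) : ℝ)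
                = (siteK b c γ d s i t : ℝ) - (d i (t + 1) : ℝ)
                  + (siteA b c γ d s i t : ℝ) := by
              rw [hK, Nat.cast_add, Nat.cast_sub hloss]
            rw [hDc, hKc, hLc]
            linarith
          · have hKlt : ¬ (b i ≤ siteK b c γ d s i t) := by omega
            have iB' := iB.resolve_right hKlt
            have hKc : (siteK b c γ d s i (t + 1) : ℝ) = (siteA b c γ d s i t : ℝ) := by
              have : siteK b c γ d s i (t + 1) = siteA b c γ d s i t := by omega
              rw [this]
            rw [hDc, hKc, hLc]
            linarith
        · rw [hDc, hLc]
          rw [hDc] at hLe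
          linarith
      · have hA0 := siteA_not_cond b c γ d s i t hcond
        have hK' : siteK b c γ d s i (t + 1) = siteK b c γ d s i t - d i (t + 1) := by
          omega
        have hL' : gpaL b c γ d s i (t + 1) = gpaL b c γ d s i t := by omega
        have hLc' : (gpaL b c γ d s i (t + 1) : ℝ) = (gpaL b c γ d s i t : ℝ) := by
          rw [hL']
        refine ⟨?_, ?_, ?_⟩
        · rcases le_or_gt (d i (t + 1)) (siteK b c γ d s i t) with hloss | hloss
          · have hKc : (siteK b c γ d s i (t + 1) : ℝ)
                = (siteK b c γ d s i t : ℝ) - (d i (t + 1) : ℝ) := by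
              rw [hK', Nat.cast_sub hloss]
            rw [hDc, hKc, hLc']
            linarith
          · have hKlt : ¬ (b i ≤ siteK b c γ d s i t) := by omega
            have iB' := iB.resolve_right hKlt
            have hKc : (siteK b c γ d s i (t + 1) : ℝ) = 0 := by
              have : siteK b c γ d s i (t + 1) = 0 := by omega
              rw [this, Nat.cast_zero]
            rw [hDc, hKc, hLc']
            linarith
        · rcases Nat.lt_or_ge (siteK b c γ d s i t - d i (t + 1)) (b i) with hr | hr
          · left
            have hnle : ¬ ((gpaL b c γ d s i t : ℝ)
                ≤ γ i * ((∑ u ∈ Icc 1 (t + 1), d i u : ℕ) : ℝ)) := by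
              intro hle; exact hcond ⟨hr, hle⟩
            push_neg at hnle
            rw [hLc']
            linarith
          · right
            rw [hK']; exact hr
        · rw [hDc, hLc']
          linarith
/-- cast of truncated subtraction -/
lemma cast_sub_max (a b' : ℕ) : ((a - b' : ℕ) : ℝ) = max ((a : ℝ) - (b' : ℝ)) 0 := by
  rcases le_total b' a with h | h
  · rw [Nat.cast_sub h, max_eq_left]
    have : (b' : ℝ) ≤ a := by exact_mod_cast h
    linarith
  · rw [Nat.sub_eq_zero_of_le h, Nat.cast_zero, max_eq_right]
    have : (a : ℝ) ≤ b' := by exact_mod_cast h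
    linarith

/-- the lost-sales accounting identity -/
lemma site_lost_sum : ∀ t : ℕ,
    (∑ u ∈ Icc 1 t, ((d i u - siteK b c γ d s i (u - 1) : ℕ) : ℝ))
      = ((∑ u ∈ Icc 1 t, d i u : ℕ) : ℝ)
        - ((b i : ℝ) + (gpaL b c γ d s i t : ℝ) - (siteK b c γ d s i t : ℝ)) := by
  intro t
  induction t with
  | zero =>
      rw [siteK_zero, gpaL_zero]
      simp
  | succ t ih =>
      have h1 : (1:ℕ) ≤ t + 1 := by omega
      rw [Finset.sum_Icc_succ_top h1, Finset.sum_Icc_succ_top h1]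
      have hK := siteK_succ b c γ d s i t
      have hL := gpaL_succ b c γ d s i t
      have ht1 : t + 1 - 1 = t := by omega
      rw [ht1, ih]
      have hLc : (gpaL b c γ d s i (t + 1) : ℝ)
          = (gpaL b c γ d s i t : ℝ) + (siteA b c γ d s i t : ℝ) := by
        rw [hL, Nat.cast_add]
      have hDc : ((∑ u ∈ Icc 1 t, d i u + d i (t+1) : ℕ) : ℝ)
          = ((∑ u ∈ Icc 1 t, d i u : ℕ) : ℝ) + (d i (t + 1) : ℝ) := by
        rw [Nat.cast_add]
      rw [hLc, hDc]
      rcases le_total (d i (t + 1)) (siteK b c γ d s i t) with hloss | hloss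
      · have hlost : ((d i (t+1) - siteK b c γ d s i t : ℕ) : ℝ) = 0 := by
          rw [Nat.sub_eq_zero_of_le hloss, Nat.cast_zero]
        have hKc : (siteK b c γ d s i (t + 1) : ℝ)
            = (siteK b c γ d s i t : ℝ) - (d i (t + 1) : ℝ)
              + (siteA b c γ d s i t : ℝ) := by
          rw [hK, Nat.cast_add, Nat.cast_sub hloss]
        rw [hlost, hKc]
        ring
      · have hlost : ((d i (t+1) - siteK b c γ d s i t : ℕ) : ℝ)
            = (d i (t+1) : ℝ) - (siteK b c γ d s i t : ℝ) := by
          rw [Nat.cast_sub hloss]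
        have hKc : (siteK b c γ d s i (t + 1) : ℝ) = (siteA b c γ d s i t : ℝ) := by
          have : siteK b c γ d s i (t + 1) = siteA b c γ d s i t := by omega
          rw [this]
        rw [hlost, hKc]
        ring

/-- `stock` coincides with the GPA stock -/
lemma site_stock : ∀ t : ℕ,
    stock (b i) (d i) (fun u => gpaAlloc b c γ d s i u) t = (siteK b c γ d s i t : ℝ) := by
  intro t
  induction t with
  | zero => rw [siteK_zero]; rfl
  | succ t ih =>
      show max _ 0 + _ = _
      rw [ih]
      have hK := siteK_succ b c γ d s i t
      have hL := gpaL_succ b c γ d s i t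
      have halloc : gpaAlloc b c γ d s i (t + 1) = (siteA b c γ d s i t : ℝ) := by
        unfold gpaAlloc
        have ht1 : t + 1 - 1 = t := by omega
        rw [ht1]
        have : gpaL b c γ d s i (t + 1) - gpaL b c γ d s i t = siteA b c γ d s i t := by
          omega
        rw [this]
      simp only []
      rw [halloc, ← cast_sub_max]
      rw [hK, Nat.cast_add]

/-- transport sum identity -/
lemma site_transport_sum (T : ℕ) (hc1 : 1 ≤ c i) (wi : ℝ)
    (hpos : ∀ u, u ≤ T → 0 < (gpaState b c γ d s u).1) :
    ∀ t, t ≤ T →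
      (∑ u ∈ Icc 1 t, wi * ((⌈gpaAlloc b c γ d s i u / (c i : ℝ)⌉ : ℤ) : ℝ))
        = wi / (c i : ℝ) * (gpaL b c γ d s i t : ℝ) := by
  intro t
  induction t with
  | zero =>
      intro _
      rw [gpaL_zero]
      simp
  | succ t ih =>
      intro ht
      have h1 : (1:ℕ) ≤ t + 1 := by omega
      rw [Finset.sum_Icc_succ_top h1, ih (by omega)]
      obtain ⟨m, hm⟩ := siteA_mul b c γ d s i t hc1 (hpos (t+1) ht)
      have halloc : gpaAlloc b c γ d s i (t + 1) = (siteA b c γ d s i t : ℝ) := by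
        unfold gpaAlloc
        have ht1 : t + 1 - 1 = t := by omega
        rw [ht1]
        have hL := gpaL_succ b c γ d s i t
        have : gpaL b c γ d s i (t + 1) - gpaL b c γ d s i t = siteA b c γ d s i t := by
          omega
        rw [this]
      have hcne : (c i : ℝ) ≠ 0 := by
        have : (1:ℝ) ≤ (c i : ℝ) := by exact_mod_cast hc1
        linarith
      have hdivm : gpaAlloc b c γ d s i (t + 1) / (c i : ℝ) = (m : ℝ) := by
        rw [halloc, hm]
        push_cast
        rw [mul_comm]
        exact mul_div_cancel_right₀ _ hcne
      have hceil : ((⌈gpaAlloc b c γ d s i (t + 1) / (c i : ℝ)⌉ : ℤ) : ℝ) = (m : ℝ) := by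
        rw [hdivm]
        rw [Int.ceil_natCast]
        rfl
      rw [hceil]
      have hL := gpaL_succ b c γ d s i t
      have hLc : (gpaL b c γ d s i (t + 1) : ℝ)
          = (gpaL b c γ d s i t : ℝ) + (c i : ℝ) * (m : ℝ) := by
        rw [hL, hm, Nat.cast_add, Nat.cast_mul]
      rw [hLc]
      field_simp
end Site


/-- **Sitewise cost bounds for GPA when the hub is not exhausted.** If
`s^end = s − Σ_i L_i > 0`, then for every site `i`:
`transport_i(ℓ) ≤ γ_i·D_i·(w_i/c_i) + p·(b_i + 2c_i)` and
`penalty_i(ℓ) ≤ (1 − γ_i)·p·D_i + p·c_i`. -/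
theorem gpa_sitewise_bounds_not_exhausted
    (n T : ℕ) (c b : Fin n → ℕ) (hc : ∀ i, 1 ≤ c i)
    (w : Fin n → ℝ) (hw : ∀ i, 0 ≤ w i)
    (p : ℝ) (hp : 0 ≤ p) (hwp : ∀ i, w i ≤ p * c i)
    (s : ℕ) (d : Fin n → ℕ → ℕ) (hd : ∀ i, ∀ t ∈ Icc 1 T, d i t ≤ b i)
    (γ : Fin n → ℝ) (hγ : ∀ i, 0 ≤ γ i ∧ γ i ≤ 1)
    (ℓ : Fin n → ℕ → ℝ) (hℓ : ℓ = fun i t => gpaAlloc b c γ d s i t)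
    (hend : (∑ i, gpaL b c γ d s i T) < s) :
    ∀ i, transportCost T (w i) (c i) (ℓ i)
          ≤ γ i * ((∑ t ∈ Icc 1 T, d i t : ℕ) : ℝ) * (w i / c i) + p * (b i + 2 * c i)
      ∧ penaltyCost T p (b i) (d i) (ℓ i)
          ≤ (1 - γ i) * p * ((∑ t ∈ Icc 1 T, d i t : ℕ) : ℝ) + p * c i := by
  subst hℓ
  intro i
  -- positivity of the remaining supply
  have hcons := gpaState_conserve b c γ d s T
  have hend' : (∑ j, (gpaState b c γ d s T).2.2 j) < s := hend
  have hposT : 0 < (gpaState b c γ d s T).1 := by omega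
  have hpos : ∀ u, u ≤ T → 0 < (gpaState b c γ d s u).1 := fun u hu =>
    lt_of_lt_of_le hposT (gpaState_fst_anti b c γ d s hu)
  obtain ⟨iA, iB, iC⟩ := site_invariant b c γ d s i T (hc i) (hd i) (hγ i).1 (hγ i).2
    hpos T le_rfl
  have hc0 : (0:ℝ) < (c i : ℝ) := by exact_mod_cast (hc i)
  have hb0 : (0:ℝ) ≤ (b i : ℝ) := Nat.cast_nonneg _
  have hD0 : (0:ℝ) ≤ ((∑ t ∈ Icc 1 T, d i t : ℕ) : ℝ) := Nat.cast_nonneg _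
  constructor
  · -- transport bound
    have htr : transportCost T (w i) (c i) (fun t => gpaAlloc b c γ d s i t)
        = w i / (c i : ℝ) * (gpaL b c γ d s i T : ℝ) := by
      unfold transportCost
      exact site_transport_sum b c γ d s i T (hc i) (w i) hpos T le_rfl
    rw [htr]
    have hwc0 : 0 ≤ w i / (c i : ℝ) := div_nonneg (hw i) (le_of_lt hc0)
    have hwcp : w i / (c i : ℝ) ≤ p := by
      rw [div_le_iff₀ hc0]
      exact hwp i
    have h1 : w i / (c i : ℝ) * (gpaL b c γ d s i T : ℝ)
        ≤ w i / (c i : ℝ) * (γ i * ((∑ t ∈ Icc 1 T, d i t : ℕ) : ℝ) + b i + c i) :=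
      mul_le_mul_of_nonneg_left iC hwc0
    have h2 : w i / (c i : ℝ) * ((b i : ℝ) + (c i : ℝ)) ≤ p * ((b i : ℝ) + (c i : ℝ)) :=
      mul_le_mul_of_nonneg_right hwcp (by linarith)
    have hγD : 0 ≤ γ i * ((∑ t ∈ Icc 1 T, d i t : ℕ) : ℝ) := mul_nonneg (hγ i).1 hD0
    have h3 : w i / (c i : ℝ) * (γ i * ((∑ t ∈ Icc 1 T, d i t : ℕ) : ℝ))
        ≤ p * (γ i * ((∑ t ∈ Icc 1 T, d i t : ℕ) : ℝ)) := by
      exact mul_le_mul_of_nonneg_right hwcp hγD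
    have hpc : 0 ≤ p * (c i : ℝ) := mul_nonneg hp (le_of_lt hc0)
    nlinarith [mul_le_mul_of_nonneg_left iC hwc0]
  · -- penalty bound
    have hpen : penaltyCost T p (b i) (d i) (fun t => gpaAlloc b c γ d s i t)
        = p * (((∑ t ∈ Icc 1 T, d i t : ℕ) : ℝ)
            - ((b i : ℝ) + (gpaL b c γ d s i T : ℝ) - (siteK b c γ d s i T : ℝ))) := by
      unfold penaltyCost
      rw [← site_lost_sum b c γ d s i T, Finset.mul_sum]
      refine Finset.sum_congr rfl (fun t _ => ?_)
      congr 1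
      rw [cast_sub_max, site_stock b c γ d s i (t - 1)]
    rw [hpen]
    have hkey : ((∑ t ∈ Icc 1 T, d i t : ℕ) : ℝ)
        - ((b i : ℝ) + (gpaL b c γ d s i T : ℝ) - (siteK b c γ d s i T : ℝ))
        ≤ (1 - γ i) * ((∑ t ∈ Icc 1 T, d i t : ℕ) : ℝ) + c i := by
      nlinarith [iA]
    have := mul_le_mul_of_nonneg_left hkey hp
    nlinarith [this]
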